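/- Let K be a number field with ring of integers O, let (g, 𝔭, 𝔟, 𝔠) be a generalized Mori quadruple in K, and let F(x) = x^{2g+1} − 𝔟·x − 𝔠/4 ∈ O[1/2][x] ⊂ K[x]. Assume there exists a maximal ideal 𝔟₂ ⊂ O of residual characteristic 2 whose ramification index e(𝔟₂) over 2 in K/ℚ is relatively prime to 2g+1. Then F(x) is irreducible over the completion K_{𝔟₂}, hence irreducible over K, and the Galois extension K(R_F)/K is ramified at 𝔟₂. -/

import Mathlib

open Polynomial NumberField IsDedekindDomain

noncomputable section

set_option synthInstance.maxHeartbeats 1000000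
set_option maxHeartbeats 1000000

variable (K : Type) [Field K] [NumberField K]

/-- `(g, 𝔭, bb, cc)` is a generalized Mori quadruple in the number field `K`:
`g` is a positive integer; `𝔭` is a maximal ideal of `𝓞 K` of odd residual characteristic
and residue cardinality `q` such that every prime divisor of `g` divides `(q-1)/2`;
`bb mod 𝔭` generates the multiplicative group of the residue field (has order `q-1`);
`cc ∈ 𝔭`, `cc - 1 ∈ 2·𝓞 K`, and `bb·O + cc·O = bb·O + (2g+1)·O = 2g·O + cc·O = O`. -/
def IsGenMoriQuadruple (g : ℕ) (𝔭 : Ideal (𝓞 K)) (bb cc : 𝓞 K) : Prop :=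
  0 < g ∧ 𝔭.IsMaximal ∧ (2 : 𝓞 K) ∉ 𝔭 ∧
    (∀ r : ℕ, r.Prime → r ∣ g → r ∣ (Nat.card ((𝓞 K) ⧸ 𝔭) - 1) / 2) ∧
    orderOf (Ideal.Quotient.mk 𝔭 bb) = Nat.card ((𝓞 K) ⧸ 𝔭) - 1 ∧
    cc ∈ 𝔭 ∧ cc - 1 ∈ Ideal.span {(2 : 𝓞 K)} ∧
    Ideal.span {bb} ⊔ Ideal.span {cc} = ⊤ ∧
    Ideal.span {bb} ⊔ Ideal.span {((2 * g + 1 : ℕ) : 𝓞 K)} = ⊤ ∧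
    Ideal.span {((2 * g : ℕ) : 𝓞 K)} ⊔ Ideal.span {cc} = ⊤

/-- The generalized Mori trinomial `F(x) = x^(2g+1) - bb·x - cc/4 ∈ K[x]`. -/
def genMoriPoly (g : ℕ) (bb cc : 𝓞 K) : K[X] :=
  X ^ (2 * g + 1) - Polynomial.C (algebraMap (𝓞 K) K bb) * X
    - Polynomial.C (algebraMap (𝓞 K) K cc / 4)

namespace GenMoriAux

open Multiplicative

local notation "Γ" => WithZero (Multiplicative ℤ)

lemma coe_ofAdd_pow (c : ℤ) (k : ℕ) :
    ((ofAdd c : Multiplicative ℤ) : Γ) ^ k = ((ofAdd ((k : ℤ) * c) : Multiplicative ℤ) : Γ) := by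
  rw [← WithZero.coe_pow, ← ofAdd_nsmul, nsmul_eq_mul]

lemma mul_lt_mul_of_lt_of_le₀ {α : Type*} [LinearOrderedCommGroupWithZero α] {a b c d : α}
    (hab : a ≤ b) (hb : b ≠ 0) (hcd : c < d) : a * c < b * d :=
  calc a * c ≤ b * c := mul_le_mul_left hab c
    _ < b * d := mul_lt_mul_of_pos_left hcd (zero_lt_iff.mpr hb)

section Dumas

variable {F : Type*} [Field F]

lemma dumas_core (v : Valuation F Γ)
    {f g h : F[X]} {n : ℕ} (hn : f.natDegree = n) (hn0 : 0 < n)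
    {c : ℤ}
    (hc0 : v (f.coeff 0) = ((ofAdd c : Multiplicative ℤ) : Γ))
    (hmid : ∀ i, 0 < i → i < n →
      (v (f.coeff i)) ^ n ≤ ((ofAdd c : Multiplicative ℤ) : Γ) ^ (n - i))
    (hf : f.Monic) (hg : g.Monic) (hh : h.Monic) (hfgh : f = g * h) :
    (n : ℤ) ∣ (g.natDegree : ℤ) * c := by
  classical
  set C : Γ := ((ofAdd c : Multiplicative ℤ) : Γ) with hC
  have hC0 : C ≠ 0 := WithZero.coe_ne_zero
  set d := g.natDegree with hd
  set m := h.natDegree with hm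
  have hdm : d + m = n := by
    rw [← hn, hfgh, natDegree_mul hg.ne_zero hh.ne_zero]
  set a : ℕ → Γ := fun i => v (g.coeff i) ^ n * C ^ i with ha
  set b : ℕ → Γ := fun j => v (h.coeff j) ^ n * C ^ j with hb
  have had : a d = C ^ d := by
    simp only [ha, hd, hg.coeff_natDegree, v.map_one, one_pow, one_mul]
  have hbm : b m = C ^ m := by
    simp only [hb, hm, hh.coeff_natDegree, v.map_one, one_pow, one_mul]
  have ha_out : ∀ i, d < i → a i = 0 := fun i hi => by
    simp only [ha, coeff_eq_zero_of_natDegree_lt hi, v.map_zero, zero_pow hn0.ne',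
      zero_mul]
  have hb_out : ∀ j, m < j → b j = 0 := fun j hj => by
    simp only [hb, coeff_eq_zero_of_natDegree_lt hj, v.map_zero, zero_pow hn0.ne',
      zero_mul]
  set A := (Finset.range (d + 1)).sup a with hA
  set B := (Finset.range (m + 1)).sup b with hB
  have haA : ∀ i, a i ≤ A := by
    intro i
    rcases le_or_gt i d with hi | hi
    · exact Finset.le_sup (Finset.mem_range.mpr (Nat.lt_succ_of_le hi))
    · rw [ha_out i hi]; exact zero_le'
  have hbB : ∀ j, b j ≤ B := by
    intro j
    rcases le_or_gt j m with hj | hj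
    · exact Finset.le_sup (Finset.mem_range.mpr (Nat.lt_succ_of_le hj))
    · rw [hb_out j hj]; exact zero_le'
  have hCdA : C ^ d ≤ A := le_of_eq_of_le had.symm (haA d)
  have hCmB : C ^ m ≤ B := le_of_eq_of_le hbm.symm (hbB m)
  have hA0 : A ≠ 0 := by
    intro h0
    rw [h0] at hCdA
    exact pow_ne_zero d hC0 (le_zero_iff.mp hCdA)
  have hB0 : B ≠ 0 := by
    intro h0
    rw [h0] at hCmB
    exact pow_ne_zero m hC0 (le_zero_iff.mp hCmB)
  obtain ⟨i₁, hi₁mem, hi₁⟩ :=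
    Finset.exists_mem_eq_sup (Finset.range (d + 1)) ⟨0, Finset.mem_range.mpr (Nat.succ_pos d)⟩ a
  obtain ⟨j₁, hj₁mem, hj₁⟩ :=
    Finset.exists_mem_eq_sup (Finset.range (m + 1)) ⟨0, Finset.mem_range.mpr (Nat.succ_pos m)⟩ b
  have hex : ∃ i, A = a i := ⟨i₁, hi₁⟩
  have hexb : ∃ j, B = b j := ⟨j₁, hj₁⟩
  set i₀ := Nat.find hex with hi₀def
  set j₀ := Nat.find hexb with hj₀def
  have hAi₀ : A = a i₀ := Nat.find_spec hex
  have hBj₀ : B = b j₀ := Nat.find_spec hexb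
  have hi₀min : ∀ i, i < i₀ → a i < A := fun i hi =>
    lt_of_le_of_ne (haA i) fun he => Nat.find_min hex hi he.symm
  have hj₀min : ∀ j, j < j₀ → b j < B := fun j hj =>
    lt_of_le_of_ne (hbB j) fun he => Nat.find_min hexb hj he.symm
  -- key1
  have key1 : ∀ k, v (f.coeff k) ^ n * C ^ k ≤ C ^ n := by
    intro k
    rcases Nat.lt_trichotomy k n with hk | hk | hk
    · rcases Nat.eq_zero_or_pos k with rfl | hk0
      · rw [hc0, pow_zero, mul_one]
      · calc v (f.coeff k) ^ n * C ^ k ≤ C ^ (n - k) * C ^ k :=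
              mul_le_mul_left (hmid k hk0 hk) _
          _ = C ^ n := by rw [← pow_add, Nat.sub_add_cancel hk.le]
    · have hcf : f.coeff k = 1 := by rw [hk, ← hn]; exact hf.coeff_natDegree
      rw [hcf, v.map_one, one_pow, one_mul, hk]
    · rw [coeff_eq_zero_of_natDegree_lt (by rw [hn]; exact hk), v.map_zero,
        zero_pow hn0.ne', zero_mul]
      exact zero_le'
  -- the distinguished term
  have hterm : v (g.coeff i₀ * h.coeff j₀) ^ n * C ^ (i₀ + j₀) = A * B := by
    rw [hAi₀, hBj₀]
    simp only [ha, hb]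
    rw [v.map_mul, mul_pow, pow_add, mul_mul_mul_comm]
  have htne : v (g.coeff i₀ * h.coeff j₀) ≠ 0 := by
    intro h0
    rw [h0, zero_pow hn0.ne', zero_mul] at hterm
    exact mul_ne_zero hA0 hB0 hterm.symm
  have hothers : ∀ p : ℕ × ℕ, p.1 + p.2 = i₀ + j₀ → p ≠ (i₀, j₀) →
      v (g.coeff p.1 * h.coeff p.2) < v (g.coeff i₀ * h.coeff j₀) := by
    rintro ⟨i, j⟩ hij hne
    have hlt : a i * b j < A * B := by
      rcases lt_trichotomy i i₀ with hi | hi | hi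
      · calc a i * b j = b j * a i := mul_comm _ _
          _ < B * A := mul_lt_mul_of_lt_of_le₀ (hbB j) hB0 (hi₀min i hi)
          _ = A * B := mul_comm _ _
      · exact absurd (Prod.ext hi (by omega)) hne
      · have hj : j < j₀ := by omega
        exact mul_lt_mul_of_lt_of_le₀ (haA i) hA0 (hj₀min j hj)
    have hval : v (g.coeff i * h.coeff j) ^ n * C ^ (i₀ + j₀) = a i * b j := by
      simp only [ha, hb]
      rw [← hij, v.map_mul, mul_pow, pow_add, mul_mul_mul_comm]
    have h2 : v (g.coeff i * h.coeff j) ^ n * C ^ (i₀ + j₀) <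
        v (g.coeff i₀ * h.coeff j₀) ^ n * C ^ (i₀ + j₀) := by
      rw [hval, hterm]; exact hlt
    have hxn : v (g.coeff i * h.coeff j) ^ n < v (g.coeff i₀ * h.coeff j₀) ^ n := by
      by_contra hcon
      exact absurd (mul_le_mul_left (not_lt.mp hcon) (C ^ (i₀ + j₀))) (not_le.mpr h2)
    by_contra hcon
    exact absurd (pow_le_pow_left' (not_lt.mp hcon) n) (not_le.mpr hxn)
  have hcoeffk : v (f.coeff (i₀ + j₀)) = v (g.coeff i₀ * h.coeff j₀) := by
    rw [hfgh, coeff_mul]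
    exact v.map_sum_eq_of_lt (j := (i₀, j₀)) (Finset.HasAntidiagonal.mem_antidiagonal.mpr rfl)
      (fun p hp => by
        have hp' : p ∈ Finset.HasAntidiagonal.antidiagonal (i₀ + j₀) ∧ p ≠ (i₀, j₀) := by
          simpa [Finset.mem_sdiff] using hp
        exact hothers p (Finset.HasAntidiagonal.mem_antidiagonal.mp hp'.1) hp'.2)
  have key2 : A * B = v (f.coeff (i₀ + j₀)) ^ n * C ^ (i₀ + j₀) := by
    rw [hcoeffk, hterm]
  have hABle : A * B ≤ C ^ n := by
    rw [key2]; exact key1 (i₀ + j₀)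
  have hCn : C ^ n = C ^ d * C ^ m := by rw [← pow_add, hdm]
  -- A = C^d, B = C^m
  have hAeq : A = C ^ d := by
    by_contra hne
    have h1 : C ^ d < A := lt_of_le_of_ne hCdA (Ne.symm hne)
    have h2 : C ^ n < A * B := by
      calc C ^ n = C ^ m * C ^ d := by rw [← pow_add, add_comm, hdm]
        _ < B * A := mul_lt_mul_of_lt_of_le₀ hCmB hB0 h1
        _ = A * B := mul_comm _ _
    exact absurd (lt_of_lt_of_le h2 hABle) (lt_irrefl _)
  have hBeq : B = C ^ m := by
    by_contra hne
    have h1 : C ^ m < B := lt_of_le_of_ne hCmB (Ne.symm hne)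
    have h2 : C ^ n < A * B := by
      calc C ^ n = C ^ d * C ^ m := hCn
        _ < A * B := mul_lt_mul_of_lt_of_le₀ hCdA hA0 h1
    exact absurd (lt_of_lt_of_le h2 hABle) (lt_irrefl _)
  -- a 0 = C ^ d
  have ha0b0 : a 0 * b 0 = C ^ n := by
    have hcoeff0 : f.coeff 0 = g.coeff 0 * h.coeff 0 := by rw [hfgh, mul_coeff_zero]
    rw [ha, hb]
    simp only [pow_zero, mul_one]
    rw [← mul_pow, ← v.map_mul, ← hcoeff0, hc0]
  have ha0 : a 0 = C ^ d := by
    by_contra hne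
    have h1 : a 0 < C ^ d := lt_of_le_of_ne ((haA 0).trans_eq hAeq) hne
    have h2 : b 0 ≤ C ^ m := (hbB 0).trans_eq hBeq
    have h3 : a 0 * b 0 < C ^ n := by
      calc a 0 * b 0 = b 0 * a 0 := mul_comm _ _
        _ < C ^ m * C ^ d := mul_lt_mul_of_lt_of_le₀ h2 (pow_ne_zero m hC0) h1
        _ = C ^ n := by rw [← pow_add, add_comm, hdm]
    rw [ha0b0] at h3
    exact absurd h3 (lt_irrefl _)
  have hv0 : v (g.coeff 0) ^ n = C ^ d := by
    have : a 0 = v (g.coeff 0) ^ n := by simp only [ha]; simp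
    rwa [this] at ha0
  have hvg0 : v (g.coeff 0) ≠ 0 := by
    intro h0
    rw [h0, zero_pow hn0.ne'] at hv0
    exact pow_ne_zero d hC0 hv0.symm
  obtain ⟨u, hu⟩ := WithZero.ne_zero_iff_exists.mp hvg0
  rw [← hu, hC, ← WithZero.coe_pow, ← WithZero.coe_pow] at hv0
  have huv : u ^ n = (ofAdd c) ^ d := WithZero.coe_inj.mp hv0
  have h3 : (n : ℤ) * u.toAdd = (d : ℤ) * c := by
    have := congrArg toAdd huv
    simpa [toAdd_pow, nsmul_eq_mul] using this
  exact ⟨u.toAdd, h3.symm⟩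

lemma dumas_irreducible (v : Valuation F Γ)
    {f : F[X]} (hf : f.Monic) {n : ℕ} (hn : f.natDegree = n) (hn1 : 1 < n)
    {c : ℤ}
    (hc0 : v (f.coeff 0) = ((ofAdd c : Multiplicative ℤ) : Γ))
    (hmid : ∀ i, 0 < i → i < n →
      (v (f.coeff i)) ^ n ≤ ((ofAdd c : Multiplicative ℤ) : Γ) ^ (n - i))
    (hcop : IsCoprime (n : ℤ) c) : Irreducible f := by
  have hn0 : 0 < n := by omega
  constructor
  · intro hu
    have := natDegree_eq_zero_of_isUnit hu
    omega
  · intro p q hpq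
    by_contra hcon
    push_neg at hcon
    obtain ⟨hp, hq⟩ := hcon
    have hf0 : f ≠ 0 := hf.ne_zero
    have hp0 : p ≠ 0 := by rintro rfl; rw [zero_mul] at hpq; exact hf0 hpq
    have hq0 : q ≠ 0 := by rintro rfl; rw [mul_zero] at hpq; exact hf0 hpq
    have hposdeg : ∀ r : F[X], r ≠ 0 → ¬ IsUnit r → 0 < r.natDegree := by
      intro r hr0 hru
      rcases Nat.eq_zero_or_pos r.natDegree with h0 | h0
      · exfalso
        apply hru
        have hrc : r = Polynomial.C (r.coeff 0) := eq_C_of_natDegree_eq_zero h0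
        have hc' : r.coeff 0 ≠ 0 := fun hz => hr0 (by rw [hrc, hz, map_zero])
        rw [hrc]
        exact isUnit_C.mpr (isUnit_iff_ne_zero.mpr hc')
      · exact h0
    have hpd : 0 < p.natDegree := hposdeg p hp0 hp
    have hqd : 0 < q.natDegree := hposdeg q hq0 hq
    have hplc : p.leadingCoeff ≠ 0 := leadingCoeff_ne_zero.mpr hp0
    have hqlc : q.leadingCoeff ≠ 0 := leadingCoeff_ne_zero.mpr hq0
    set p' := p * Polynomial.C p.leadingCoeff⁻¹ with hp'
    set q' := q * Polynomial.C q.leadingCoeff⁻¹ with hq'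
    have hp'm : p'.Monic := monic_mul_leadingCoeff_inv hp0
    have hq'm : q'.Monic := monic_mul_leadingCoeff_inv hq0
    have hlc : p.leadingCoeff * q.leadingCoeff = 1 := by
      have hlm := leadingCoeff_mul p q
      rw [← hpq, hf.leadingCoeff] at hlm
      exact hlm.symm
    have hfpq' : f = p' * q' := by
      rw [hp', hq', mul_mul_mul_comm, ← Polynomial.C_mul, ← mul_inv, hlc, inv_one,
        Polynomial.C_1, mul_one]
      exact hpq
    have hdp : p'.natDegree = p.natDegree := by
      rw [hp', natDegree_mul_C (inv_ne_zero hplc)]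
    have hdq : q'.natDegree = q.natDegree := by
      rw [hq', natDegree_mul_C (inv_ne_zero hqlc)]
    have hd'm' : p'.natDegree + q'.natDegree = n := by
      rw [← hn, hfpq', natDegree_mul hp'm.ne_zero hq'm.ne_zero]
    have hdvd := dumas_core v hn hn0 hc0 hmid hf hp'm hq'm hfpq'
    have hdvd2 : (n : ℤ) ∣ (p'.natDegree : ℤ) := hcop.dvd_of_dvd_mul_right hdvd
    have hdvd3 : n ∣ p'.natDegree := Int.natCast_dvd_natCast.mp hdvd2
    have hle : n ≤ p'.natDegree := Nat.le_of_dvd (by rw [hdp]; exact hpd) hdvd3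
    omega

end Dumas

section Val

variable {R : Type*} [CommRing R] [IsDedekindDomain R] [CharZero R]

/-- The `w`-adic valuation of `2` is the ramification index of `w` over `(2) ⊂ ℤ`. -/
lemma intVal_two (w : HeightOneSpectrum R) :
    w.intValuationDef (2 : R) =
      ((ofAdd (-(Ideal.ramificationIdx' (Ideal.span {(2 : ℤ)})
        w.asIdeal : ℤ)) : Multiplicative ℤ) : Γ) := by
  classical
  have h2 : (2 : R) ≠ 0 := two_ne_zero
  have hmapeq : Ideal.map (algebraMap ℤ R) (Ideal.span {(2 : ℤ)}) = Ideal.span {(2 : R)} := by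
    rw [Ideal.map_span]
    norm_num
  have hspan : Ideal.span {(2 : R)} ≠ ⊥ := by
    simpa [Ideal.span_singleton_eq_bot] using h2
  have hcount : (Associates.mk w.asIdeal).count (Associates.mk (Ideal.span {(2 : R)})).factors
      = Ideal.ramificationIdx' (Ideal.span {(2 : ℤ)}) w.asIdeal := by
    rw [count_associates_factors_eq hspan w.isPrime w.ne_bot,
      Ideal.IsDedekindDomain.ramificationIdx'_eq_normalizedFactors_count
        (by rw [hmapeq]; exact hspan) w.isPrime w.ne_bot, hmapeq]
  rw [w.intValuationDef_if_neg h2, hcount]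
  rfl

variable {Kf : Type*} [Field Kf] [Algebra R Kf] [IsFractionRing R Kf]

lemma val_four (w : HeightOneSpectrum R) :
    w.valuation Kf (4 : Kf) =
      ((ofAdd (-((2 * Ideal.ramificationIdx' (Ideal.span {(2 : ℤ)})
        w.asIdeal : ℕ) : ℤ)) : Multiplicative ℤ) : Γ) := by
  have h4 : (4 : Kf) = algebraMap R Kf (4 : R) := (map_ofNat (algebraMap R Kf) 4).symm
  rw [h4, IsDedekindDomain.HeightOneSpectrum.valuation_of_algebraMap]
  have h4' : (4 : R) = 2 * 2 := by norm_num
  rw [h4', map_mul, IsDedekindDomain.HeightOneSpectrum.intValuation_apply, intVal_two,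
    ← WithZero.coe_mul, ← ofAdd_add]
  congr 2
  push_cast
  ring

lemma val_unit_of_not_mem (w : HeightOneSpectrum R) {x : R} (hx : x ∉ w.asIdeal) :
    w.valuation Kf (algebraMap R Kf x) = 1 := by
  rw [IsDedekindDomain.HeightOneSpectrum.valuation_of_algebraMap,
    IsDedekindDomain.HeightOneSpectrum.intValuation_apply]
  refine le_antisymm (w.intValuation_le_one x) ?_
  by_contra hlt
  push_neg at hlt
  exact hx (Ideal.dvd_span_singleton.mp ((w.intValuation_lt_one_iff_dvd x).mp hlt))

lemma one_le_ram (w : HeightOneSpectrum R) (h2 : (2 : R) ∈ w.asIdeal) :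
    0 < Ideal.ramificationIdx' (Ideal.span {(2 : ℤ)}) w.asIdeal := by
  have hlt := (w.intValuation_lt_one_iff_dvd (2 : R)).mpr (Ideal.dvd_span_singleton.mpr h2)
  rw [IsDedekindDomain.HeightOneSpectrum.intValuation_apply, intVal_two w] at hlt
  by_contra h0
  push_neg at h0
  have he0 : Ideal.ramificationIdx' (Ideal.span {(2 : ℤ)}) w.asIdeal = 0 := by
    omega
  rw [he0] at hlt
  simp at hlt

end Val

end GenMoriAux

/-- For a generalized Mori quadruple in `K` and a prime `𝔟₂` of `K` above `2` whose
ramification index over `2` is coprime to `2g+1`: the polynomial `F` is irreducible over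
the completion `K_{𝔟₂}`, hence over `K`, and the splitting field extension `K(R_F)/K` is
ramified at `𝔟₂`. -/
theorem gen_mori_irreducible_and_ramified
    (g : ℕ) (𝔭 : Ideal (𝓞 K)) (bb cc : 𝓞 K)
    (h : IsGenMoriQuadruple K g 𝔭 bb cc)
    (𝔟₂ : Ideal (𝓞 K)) (h𝔟₂ : 𝔟₂.IsMaximal) (h2 : (2 : 𝓞 K) ∈ 𝔟₂)
    (hcop : Nat.Coprime
      (Ideal.ramificationIdx' (Ideal.span {(2 : ℤ)}) 𝔟₂)
      (2 * g + 1)) :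
    (∀ v : HeightOneSpectrum (𝓞 K), v.asIdeal = 𝔟₂ →
      Irreducible ((genMoriPoly K g bb cc).map (algebraMap K (v.adicCompletion K)))) ∧
    Irreducible (genMoriPoly K g bb cc) ∧
    ∃ Q : Ideal (𝓞 (genMoriPoly K g bb cc).SplittingField), Q.IsMaximal ∧
      Ideal.comap (algebraMap (𝓞 K) (𝓞 (genMoriPoly K g bb cc).SplittingField)) Q = 𝔟₂ ∧
      1 < Ideal.ramificationIdx' (S := 𝓞 (genMoriPoly K g bb cc).SplittingField) 𝔟₂ Q := by
  classical
  open Multiplicative GenMoriAux in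
  obtain ⟨hg0, h𝔭max, h𝔭2, hdiv, hord, hcc𝔭, hcc1, hbc, hbg1, hgc⟩ := h
  set F := genMoriPoly K g bb cc with hFdef
  have hn1 : 1 < 2 * g + 1 := by omega
  have hFeq : F = X ^ (2 * g + 1) - (Polynomial.C (algebraMap (𝓞 K) K bb) * X
      + Polynomial.C (algebraMap (𝓞 K) K cc / 4)) := by
    rw [hFdef, genMoriPoly, sub_sub]
  have hlindeg : (Polynomial.C (algebraMap (𝓞 K) K bb) * X
      + Polynomial.C (algebraMap (𝓞 K) K cc / 4)).degree < ((2 * g + 1 : ℕ) : WithBot ℕ) :=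
    lt_of_le_of_lt degree_linear_le (by exact_mod_cast (by omega : 1 < 2 * g + 1))
  have hmon : F.Monic := by
    rw [hFeq]
    exact monic_X_pow_sub (by exact_mod_cast hlindeg)
  have hdegF : F.degree = ((2 * g + 1 : ℕ) : WithBot ℕ) := by
    rw [hFeq, degree_sub_eq_left_of_degree_lt (by rw [degree_X_pow]; exact_mod_cast hlindeg),
      degree_X_pow]
  have hndeg : F.natDegree = 2 * g + 1 := natDegree_eq_of_degree_eq_some hdegF
  have hcoeff0 : F.coeff 0 = -(algebraMap (𝓞 K) K cc / 4) := by
    rw [hFdef, genMoriPoly]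
    simp only [coeff_sub, coeff_X_pow, coeff_C_mul, coeff_X_zero, coeff_C]
    rw [if_neg (by omega : ¬ (0 : ℕ) = 2 * g + 1)]
    simp
  have hcoeff1 : F.coeff 1 = -(algebraMap (𝓞 K) K bb) := by
    rw [hFdef, genMoriPoly]
    simp only [coeff_sub, coeff_X_pow, coeff_C_mul, coeff_X_one, coeff_C]
    rw [if_neg (by omega : ¬ (1 : ℕ) = 2 * g + 1), if_neg (by omega : ¬ (1 : ℕ) = 0)]
    ring
  have hcoeffmid : ∀ i, 1 < i → i < 2 * g + 1 → F.coeff i = 0 := by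
    intro i h1 h2'
    rw [hFdef, genMoriPoly]
    simp only [coeff_sub, coeff_X_pow, coeff_C_mul, coeff_X, coeff_C]
    rw [if_neg (by omega : ¬ i = 2 * g + 1), if_neg (by omega : ¬ (1 : ℕ) = i),
      if_neg (by omega : ¬ i = 0)]
    simp
  set e := Ideal.ramificationIdx' (S := 𝓞 K) (Ideal.span {(2 : ℤ)}) 𝔟₂ with hedef
  have hccnot : cc ∉ 𝔟₂ := by
    intro hmem
    have hsub : cc - 1 ∈ 𝔟₂ := (Ideal.span_singleton_le_iff_mem _).mpr h2 hcc1
    have hone : (1 : 𝓞 K) ∈ 𝔟₂ := by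
      have := 𝔟₂.sub_mem hmem hsub
      simpa using this
    exact h𝔟₂.ne_top ((Ideal.eq_top_iff_one _).mpr hone)
  have hbot : 𝔟₂ ≠ ⊥ := by
    rintro rfl
    rw [Ideal.mem_bot] at h2
    exact two_ne_zero h2
  -- the general irreducibility argument
  have key : ∀ (v : HeightOneSpectrum (𝓞 K)), v.asIdeal = 𝔟₂ →
      ∀ (F' : Type) (_ : Field F') (φ : K →+* F')
        (V : Valuation F' (WithZero (Multiplicative ℤ))),
        (∀ x : K, V (φ x) = v.valuation K x) → Irreducible (F.map φ) := by
    intro v hv F' hF' φ V hV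
    have he1 : 0 < e := by
      have h1r := one_le_ram v (by rw [hv]; exact h2)
      rw [hv] at h1r
      exact h1r
    refine dumas_irreducible V (hmon.map φ)
      (by rw [hmon.natDegree_map, hndeg]) hn1 (c := ((2 * e : ℕ) : ℤ)) ?_ ?_ ?_
    · rw [coeff_map, hV, hcoeff0, Valuation.map_neg, map_div₀,
        val_unit_of_not_mem v (by rw [hv]; exact hccnot), val_four v, hv, ← hedef]
      rw [one_div, ← WithZero.coe_inv]
      congr 1
      rw [← ofAdd_neg, neg_neg]
    · intro i hi0 hin
      rcases Nat.lt_or_ge 1 i with h1i | h1i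
      · rw [coeff_map, hcoeffmid i h1i hin, map_zero, Valuation.map_zero,
          zero_pow (by omega : 2 * g + 1 ≠ 0)]
        exact zero_le'
      · have hi1 : i = 1 := by omega
        subst hi1
        rw [coeff_map, hV, hcoeff1, Valuation.map_neg,
          IsDedekindDomain.HeightOneSpectrum.valuation_of_algebraMap]
        calc v.intValuation bb ^ (2 * g + 1) ≤ 1 :=
              pow_le_one' (v.intValuation_le_one bb) _
          _ ≤ ((ofAdd ((2 * e : ℕ) : ℤ) : Multiplicative ℤ) :
              WithZero (Multiplicative ℤ)) ^ (2 * g + 1 - 1) := by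
              rw [coe_ofAdd_pow]
              rw [show (1 : WithZero (Multiplicative ℤ)) = ((ofAdd (0 : ℤ) : Multiplicative ℤ) :
                WithZero (Multiplicative ℤ)) by simp]
              rw [WithZero.coe_le_coe, Multiplicative.ofAdd_le]
              positivity
    · rw [Int.isCoprime_iff_gcd_eq_one, Int.gcd_natCast_natCast]
      have hodd : Odd (2 * g + 1) := ⟨g, by ring⟩
      exact Nat.Coprime.mul_right hodd.coprime_two_right hcop.symm
  -- the distinguished height-one prime
  have part1 : ∀ v : HeightOneSpectrum (𝓞 K), v.asIdeal = 𝔟₂ →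
      Irreducible (F.map (algebraMap K (v.adicCompletion K))) := by
    intro v hv
    refine key v hv (v.adicCompletion K) inferInstance (algebraMap K (v.adicCompletion K))
      Valued.v ?_
    intro x
    rw [show algebraMap K (v.adicCompletion K) x = (x : v.adicCompletion K) from
      congrFun (IsDedekindDomain.HeightOneSpectrum.algebraMap_adicCompletion
        (R := 𝓞 K) (K := K) (v := v)) x]
    exact IsDedekindDomain.HeightOneSpectrum.valuedAdicCompletion_eq_valuation' v x
  have part2 : Irreducible F := by
    have hK := key ⟨𝔟₂, h𝔟₂.isPrime, hbot⟩ rfl K inferInstance (RingHom.id K)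
      ((⟨𝔟₂, h𝔟₂.isPrime, hbot⟩ : HeightOneSpectrum (𝓞 K)).valuation (K := K))
      (fun x => rfl)
    rwa [Polynomial.map_id] at hK
  refine ⟨part1, part2, ?_⟩
  -- Part 3: ramification in the splitting field
  set L := F.SplittingField with hLdef
  haveI : NumberField L := NumberField.of_module_finite K L
  have hcomm : ∀ x : 𝓞 K,
      algebraMap (𝓞 L) L (algebraMap (𝓞 K) (𝓞 L) x)
        = algebraMap K L (algebraMap (𝓞 K) K x) := fun x => rfl
  have hinj : Function.Injective (algebraMap (𝓞 K) (𝓞 L)) := by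
    intro x y hxy
    have h1 := congrArg (algebraMap (𝓞 L) L) hxy
    rw [hcomm, hcomm] at h1
    exact NumberField.RingOfIntegers.coe_injective ((algebraMap K L).injective h1)
  haveI := h𝔟₂
  obtain ⟨Q, hQmax, hQcomap⟩ :=
    Ideal.exists_ideal_over_maximal_of_isIntegral (R := 𝓞 K) (S := 𝓞 L) 𝔟₂
      (by rw [(RingHom.injective_iff_ker_eq_bot _).mp hinj]; exact bot_le)
  have h2Q : (2 : 𝓞 L) ∈ Q := by
    have hmem : algebraMap (𝓞 K) (𝓞 L) 2 ∈ Q := by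
      rw [← hQcomap] at h2
      exact h2
    simpa only [map_ofNat] using hmem
  have hQbot : Q ≠ ⊥ := by
    rintro rfl
    rw [Ideal.mem_bot] at h2Q
    exact two_ne_zero h2Q
  set w : HeightOneSpectrum (𝓞 L) := ⟨Q, hQmax.isPrime, hQbot⟩ with hwdef
  have hwas : w.asIdeal = Q := rfl
  set E := Ideal.ramificationIdx' (S := 𝓞 L) (Ideal.span {(2 : ℤ)}) Q with hEdef
  have hE1 : 0 < E := by
    have h1r := one_le_ram w (by rw [hwas]; exact h2Q)
    rw [hwas] at h1r
    exact h1r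
  have hdegne : F.degree ≠ 0 := by
    rw [hdegF]
    exact_mod_cast (by omega : 2 * g + 1 ≠ 0)
  obtain ⟨α, hα⟩ : ∃ α, eval₂ (algebraMap K L) α F = 0 := by
    obtain ⟨α, hα⟩ := (Polynomial.SplittingField.splits F).exists_eval_eq_zero
      (by rwa [degree_map])
    exact ⟨α, by rwa [eval_map] at hα⟩
  have hroot : α ^ (2 * g + 1) - algebraMap K L (algebraMap (𝓞 K) K bb) * α
      = algebraMap K L (algebraMap (𝓞 K) K cc / 4) := by
    have h0 : eval₂ (algebraMap K L) α (X ^ (2 * g + 1)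
        - Polynomial.C (algebraMap (𝓞 K) K bb) * X
        - Polynomial.C (algebraMap (𝓞 K) K cc / 4)) = 0 := hα
    simp only [eval₂_sub, eval₂_pow, eval₂_mul, eval₂_X, eval₂_C] at h0
    linear_combination h0
  set W := w.valuation (K := L) with hWdef
  have hWc : W (algebraMap K L (algebraMap (𝓞 K) K cc / 4))
      = ((ofAdd ((2 * E : ℕ) : ℤ) : Multiplicative ℤ) : WithZero (Multiplicative ℤ)) := by
    rw [map_div₀ (algebraMap K L), map_div₀ W, ← hcomm cc,
      val_unit_of_not_mem w (by
        rw [hwas]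
        intro hmem
        exact hccnot (by rwa [← hQcomap, Ideal.mem_comap])),
      show algebraMap K L (4 : K) = (4 : L) from map_ofNat _ 4, val_four w, hwas, ← hEdef]
    rw [one_div, ← WithZero.coe_inv]
    congr 1
    rw [← ofAdd_neg, neg_neg]
  have hWb : W (algebraMap K L (algebraMap (𝓞 K) K bb)) ≤ 1 := by
    rw [← hcomm bb, IsDedekindDomain.HeightOneSpectrum.valuation_of_algebraMap]
    exact w.intValuation_le_one _
  have hone_lt : (1 : WithZero (Multiplicative ℤ)) <
      ((ofAdd ((2 * E : ℕ) : ℤ) : Multiplicative ℤ) : WithZero (Multiplicative ℤ)) := by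
    rw [show (1 : WithZero (Multiplicative ℤ)) = ((ofAdd (0 : ℤ) : Multiplicative ℤ) :
      WithZero (Multiplicative ℤ)) by simp, WithZero.coe_lt_coe, Multiplicative.ofAdd_lt]
    exact_mod_cast (by omega : 0 < 2 * E)
  have hWsub : W (α ^ (2 * g + 1) - algebraMap K L (algebraMap (𝓞 K) K bb) * α)
      = ((ofAdd ((2 * E : ℕ) : ℤ) : Multiplicative ℤ) : WithZero (Multiplicative ℤ)) := by
    rw [hroot]
    exact hWc
  have hαn : W α ^ (2 * g + 1)
      = ((ofAdd ((2 * E : ℕ) : ℤ) : Multiplicative ℤ) : WithZero (Multiplicative ℤ)) := by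
    rcases le_or_gt (W α) 1 with hle | hlt
    · exfalso
      have hx1 : W (α ^ (2 * g + 1)) ≤ 1 := by
        rw [map_pow]
        exact pow_le_one' hle _
      have hy1 : W (algebraMap K L (algebraMap (𝓞 K) K bb) * α) ≤ 1 := by
        rw [map_mul]
        exact mul_le_one' hWb hle
      have hle1 := Valuation.map_sub_le W hx1 hy1
      rw [hWsub] at hle1
      exact absurd (lt_of_lt_of_le hone_lt hle1) (lt_irrefl _)
    · have hα0 : W α ≠ 0 := ne_of_gt (lt_trans zero_lt_one hlt)
      have hblt : W (algebraMap K L (algebraMap (𝓞 K) K bb) * α) < W (α ^ (2 * g + 1)) := by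
        rw [map_mul, map_pow]
        calc W (algebraMap K L (algebraMap (𝓞 K) K bb)) * W α ≤ 1 * W α :=
              mul_le_mul_left hWb _
          _ = W α * 1 := by rw [one_mul, mul_one]
          _ < W α * W α ^ (2 * g) := mul_lt_mul_of_lt_of_le₀ (le_refl (W α)) hα0
              (one_lt_pow' hlt (by omega : 2 * g ≠ 0))
          _ = W α ^ (2 * g + 1) := by rw [pow_succ']
      have heq := Valuation.map_sub_eq_of_lt_left W hblt
      rw [hWsub, map_pow] at heq
      exact heq.symm
  obtain ⟨u, hu⟩ := WithZero.ne_zero_iff_exists.mp (show W α ≠ 0 by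
    intro h0
    rw [h0, zero_pow (by omega : 2 * g + 1 ≠ 0)] at hαn
    exact WithZero.coe_ne_zero hαn.symm)
  rw [← hu, ← WithZero.coe_pow] at hαn
  have hun : u ^ (2 * g + 1) = ofAdd ((2 * E : ℕ) : ℤ) := WithZero.coe_inj.mp hαn
  have hdvdZ : ((2 * g + 1 : ℕ) : ℤ) ∣ ((2 * E : ℕ) : ℤ) := by
    refine ⟨u.toAdd, ?_⟩
    have hta := congrArg toAdd hun
    simp only [toAdd_pow, toAdd_ofAdd, nsmul_eq_mul] at hta
    push_cast at hta ⊢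
    linarith
  have hdvdN : (2 * g + 1) ∣ 2 * E := by exact_mod_cast hdvdZ
  haveI : Q.IsPrime := hQmax.isPrime
  set e' := Ideal.ramificationIdx' (S := 𝓞 L) 𝔟₂ Q with he'def
  have hmapne : Ideal.map (algebraMap (𝓞 K) (𝓞 L)) 𝔟₂ ≠ ⊥ := by
    intro hb
    exact hbot ((Ideal.map_eq_bot_iff_of_injective hinj).mp hb)
  have hmaple : Ideal.map (algebraMap (𝓞 K) (𝓞 L)) 𝔟₂ ≤ Q :=
    Ideal.map_le_iff_le_comap.mpr (le_of_eq hQcomap.symm)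
  have hcompeq : algebraMap ℤ (𝓞 L) = (algebraMap (𝓞 K) (𝓞 L)).comp (algebraMap ℤ (𝓞 K)) :=
    Subsingleton.elim _ _
  have hmapZne : Ideal.map ((algebraMap (𝓞 K) (𝓞 L)).comp (algebraMap ℤ (𝓞 K)))
      (Ideal.span {(2 : ℤ)}) ≠ ⊥ := by
    rw [← hcompeq, Ideal.map_span]
    simp only [Set.image_singleton, map_ofNat]
    simpa [Ideal.span_singleton_eq_bot] using (two_ne_zero : (2 : 𝓞 L) ≠ 0)
  have htower : E = e * e' := by
    rw [hEdef, he'def, hedef]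
    exact Ideal.ramificationIdx'_algebra_tower hmapne (by rw [hcompeq]; exact hmapZne) hmaple
  have he'0 : e' ≠ 0 := by
    rw [he'def]
    exact Ideal.IsDedekindDomain.ramificationIdx'_ne_zero hmapne hQmax.isPrime hmaple
  have hodd : Odd (2 * g + 1) := ⟨g, by ring⟩
  have hdvd1 : (2 * g + 1) ∣ e * e' :=
    Nat.Coprime.dvd_of_dvd_mul_left hodd.coprime_two_right (htower ▸ hdvdN)
  have hdvde' : (2 * g + 1) ∣ e' :=
    Nat.Coprime.dvd_of_dvd_mul_left hcop.symm hdvd1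
  refine ⟨Q, hQmax, hQcomap, ?_⟩
  rw [← he'def]
  have hge := Nat.le_of_dvd (Nat.pos_of_ne_zero he'0) hdvde'
  omega
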